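/- Under the setup of the four-state discrimination game, the optimal guessing probabilities satisfy the complementarity relation ((2P_WW − 1)/d_ww)² + ((2P_WP − 1)/d_wp)² ≤ 1 for any POVM. -/

import Mathlib

open Finset

set_option maxHeartbeats 1000000 in
/-- Complementarity relation for the four-state discrimination game:
((2P_WW - 1)/d_ww)^2 + ((2P_WP - 1)/d_wp)^2 <= 1 for any POVM. -/
theorem stmt8 {ι : Type*} [Fintype ι] (μ x y z : ι → ℝ) (d₀ dww dwp PWW PWP : ℝ)
    (hμ : ∀ j, 0 ≤ μ j) (hunit : ∀ j, Real.sqrt (x j ^ 2 + y j ^ 2 + z j ^ 2) = 1)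
    (hsum : ∑ j, μ j = 2)
    (hx : ∑ j, μ j * x j = 0) (hy : ∑ j, μ j * y j = 0) (hz : ∑ j, μ j * z j = 0)
    (hdww : 0 < dww) (hdwp : 0 < dwp) (hball : d₀ ^ 2 + dww ^ 2 + dwp ^ 2 ≤ 1)
    (hPWW : PWW = (1 / 2) * (1 + dww * ∑ j, (μ j / 2) * |z j|))
    (hPWP : PWP = (1 / 2) * (1 + dwp * ∑ j, (μ j / 2) * |y j|)) :
    ((2 * PWW - 1) / dww) ^ 2 + ((2 * PWP - 1) / dwp) ^ 2 ≤ 1 := by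
  have hA : (2 * PWW - 1) / dww = ∑ j, (μ j / 2) * |z j| := by
    rw [hPWW]; field_simp; ring
  have hB : (2 * PWP - 1) / dwp = ∑ j, (μ j / 2) * |y j| := by
    rw [hPWP]; field_simp; ring
  rw [hA, hB]
  set A := ∑ j, (μ j / 2) * |z j| with hAdef
  set B := ∑ j, (μ j / 2) * |y j| with hBdef
  have hA0 : 0 ≤ A := sum_nonneg fun j _ => mul_nonneg (by linarith [hμ j]) (abs_nonneg _)
  have hB0 : 0 ≤ B := sum_nonneg fun j _ => mul_nonneg (by linarith [hμ j]) (abs_nonneg _)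
  have hS0 : 0 ≤ A ^ 2 + B ^ 2 := by positivity
  have hsum' : ∑ j, μ j / 2 = 1 := by
    rw [← Finset.sum_div, hsum]; norm_num
  have hsq : ∀ j, y j ^ 2 + z j ^ 2 ≤ 1 := by
    intro j
    have h1 : x j ^ 2 + y j ^ 2 + z j ^ 2 = 1 := by
      have h0 : 0 ≤ x j ^ 2 + y j ^ 2 + z j ^ 2 := by positivity
      have := Real.sq_sqrt h0
      rw [hunit j] at this
      linarith [this]
    nlinarith [sq_nonneg (x j)]
  have key : A ^ 2 + B ^ 2 ≤ Real.sqrt (A ^ 2 + B ^ 2) := by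
    have hexp : A ^ 2 + B ^ 2 = ∑ j, (μ j / 2) * (|z j| * A + |y j| * B) := by
      simp_rw [mul_add, Finset.sum_add_distrib, ← mul_assoc, ← Finset.sum_mul]
      ring
    calc A ^ 2 + B ^ 2 = ∑ j, (μ j / 2) * (|z j| * A + |y j| * B) := hexp
      _ ≤ ∑ j, (μ j / 2) * Real.sqrt (A ^ 2 + B ^ 2) := by
          apply Finset.sum_le_sum
          intro j _
          apply mul_le_mul_of_nonneg_left _ (by linarith [hμ j])
          have hpt : 0 ≤ |z j| * A + |y j| * B :=
            add_nonneg (mul_nonneg (abs_nonneg _) hA0) (mul_nonneg (abs_nonneg _) hB0)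
          rw [show |z j| * A + |y j| * B = Real.sqrt ((|z j| * A + |y j| * B) ^ 2) by
            rw [Real.sqrt_sq hpt]]
          apply Real.sqrt_le_sqrt
          have hz2 : |z j| ^ 2 = z j ^ 2 := sq_abs _
          have hy2 : |y j| ^ 2 = y j ^ 2 := sq_abs _
          nlinarith [sq_nonneg (|z j| * B - |y j| * A), hsq j, sq_nonneg A, sq_nonneg B]
      _ = Real.sqrt (A ^ 2 + B ^ 2) := by
          rw [← Finset.sum_mul, hsum', one_mul]
  have h2 : (A ^ 2 + B ^ 2) * (A ^ 2 + B ^ 2) ≤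
      Real.sqrt (A ^ 2 + B ^ 2) * Real.sqrt (A ^ 2 + B ^ 2) :=
    mul_self_le_mul_self hS0 key
  rw [Real.mul_self_sqrt hS0] at h2
  nlinarith [hS0]
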